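/- (Theorem 2, part (i)) Every nonzero complex eigenvalue λ of the 2nd-order non-backtracking matrix B^(2) of G is also an eigenvalue of the matrix M. -/

import Mathlib

open Matrix ENNReal

namespace PercNB

variable {V : Type*} [Fintype V] [DecidableEq V]

/-- `p : Fin (g+1) → V` is a length-`g` directed path in the simple graph `G`:
`g+1` pairwise distinct vertices with consecutive vertices adjacent. -/
def IsDiPath (G : SimpleGraph V) (g : ℕ) (p : Fin (g+1) → V) : Prop :=
  Function.Injective p ∧ ∀ k : Fin g, G.Adj (p k.castSucc) (p k.succ)

instance (G : SimpleGraph V) [DecidableRel G.Adj] (g : ℕ) :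
    DecidablePred (IsDiPath G g) := fun p =>
  inferInstanceAs (Decidable (Function.Injective p ∧ ∀ k : Fin g, G.Adj (p k.castSucc) (p k.succ)))

/-- The type of length-`g` directed paths of `G`. -/
abbrev DiPath (G : SimpleGraph V) (g : ℕ) := {p : Fin (g+1) → V // IsDiPath G g p}

/-- The `g`-th-order non-backtracking matrix `B^(g)` of `G`, indexed by the length-`g`
directed paths of `G`: the `(p, q)` entry is `1` if `q k = p (k+1)` for `1 ≤ k ≤ g` and
`(p 1, …, p (g+1), q (g+1))` is a length-`(g+1)` directed path, and `0` otherwise. -/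
def NBM (G : SimpleGraph V) [DecidableRel G.Adj] (g : ℕ) :
    Matrix (DiPath G g) (DiPath G g) ℂ := fun p q =>
  if (∀ k : Fin g, q.1 k.castSucc = p.1 k.succ) ∧
      IsDiPath G (g+1) (Fin.snoc p.1 (q.1 (Fin.last g))) then 1 else 0

/-- The spectral radius of a finite square complex matrix:
the maximum modulus of its eigenvalues (`0` if the index type is empty). -/
noncomputable def specRad {n : Type*} [Fintype n] [DecidableEq n] (X : Matrix n n ℂ) : ℝ≥0∞ :=
  spectralRadius ℂ X

/-- `c : Fin k → V` is a simple cycle of length `k ≥ 3` in `G`: pairwise distinct vertices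
with `c t` adjacent to `c (t+1)` for `1 ≤ t ≤ k-1` and `c k` adjacent to `c 1`. -/
def IsSimpleCycle (G : SimpleGraph V) (k : ℕ) (c : Fin k → V) : Prop :=
  3 ≤ k ∧ Function.Injective c ∧
    ∀ t : Fin k, G.Adj (c t) (c ⟨(t.val + 1) % k, Nat.mod_lt _ t.pos⟩)

/-- The arc relation of the digraph `G^(g)` on the length-`g` directed paths of `G`:
`p → q` exactly when `B^(g)_{p,q} = 1`. -/
def NBArc (G : SimpleGraph V) (g : ℕ) (p q : DiPath G g) : Prop :=
  (∀ k : Fin g, q.1 k.castSucc = p.1 k.succ) ∧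
    IsDiPath G (g+1) (Fin.snoc p.1 (q.1 (Fin.last g)))

/-- The arc relation of the line digraph `L(G^(g-1))` (for `g ≥ 1`), under the identification
of its vertices — the arcs `(i₁,…,i_g) → (i₂,…,i_{g+1})` of `G^(g-1)` — with the length-`g`
directed paths `(i₁,…,i_{g+1})` of `G`: there is an arc `p → q` exactly when the arc
corresponding to `p` ends at the tail of the arc corresponding to `q`, i.e. when
`q k = p (k+1)` for `1 ≤ k ≤ g`. -/
def LineArc (G : SimpleGraph V) (g : ℕ) (p q : DiPath G g) : Prop :=
  ∀ k : Fin g, q.1 k.castSucc = p.1 k.succ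

/-- `c : Fin k → α` is a directed cycle of length `k` with respect to the arc relation `r`:
`k` pairwise distinct vertices with an arc from each to the cyclically next one. -/
def IsDiCycle {α : Type*} (r : α → α → Prop) (k : ℕ) (c : Fin k → α) : Prop :=
  Function.Injective c ∧ ∀ t : Fin k, r (c t) (c ⟨(t.val + 1) % k, Nat.mod_lt _ t.pos⟩)

/-- The type of directed edges of `G`: ordered pairs of adjacent vertices. -/
abbrev DiEdge (G : SimpleGraph V) := {e : V × V // G.Adj e.1 e.2}

/-- The standard non-backtracking matrix `B = B^(1)`, indexed by directed edges:
`B_{(i,j),(k,l)} = 1` iff `j = k`, `l ≠ i` and `j` is adjacent to `l`. -/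
def Bmat (G : SimpleGraph V) [DecidableRel G.Adj] : Matrix (DiEdge G) (DiEdge G) ℂ :=
  fun e f => if e.1.2 = f.1.1 ∧ f.1.2 ≠ e.1.1 ∧ G.Adj e.1.2 f.1.2 then 1 else 0

/-- `(ΔB₁)_{(i,j),(k,l)} = 1` iff `B_{(i,j),(k,l)} = 1` and `i` is adjacent to `l`. -/
def dB1 (G : SimpleGraph V) [DecidableRel G.Adj] : Matrix (DiEdge G) (DiEdge G) ℂ :=
  fun e f => if (e.1.2 = f.1.1 ∧ f.1.2 ≠ e.1.1 ∧ G.Adj e.1.2 f.1.2) ∧ G.Adj e.1.1 f.1.2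
    then 1 else 0

/-- `(ΔB₂)_{(i,j),(k,l)} = 1` iff `l = i` and `j` is adjacent to `k`. -/
def dB2 (G : SimpleGraph V) [DecidableRel G.Adj] : Matrix (DiEdge G) (DiEdge G) ℂ :=
  fun e f => if f.1.2 = e.1.1 ∧ G.Adj e.1.2 f.1.1 then 1 else 0

/-- The diagonal matrix `D_Δ` whose `((i,j),(i,j))` entry is the number of common
neighbours of `i` and `j`. -/
noncomputable def Ddel (G : SimpleGraph V) [DecidableRel G.Adj] :
    Matrix (DiEdge G) (DiEdge G) ℂ :=
  Matrix.diagonal fun e =>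
    ((Finset.univ.filter fun v => G.Adj e.1.1 v ∧ G.Adj e.1.2 v).card : ℂ)

/-- The `8E × 8E` block matrix
`M = [[B, −ΔB₂, D_Δ − I, B − ΔB₁], [I, 0, 0, 0], [0, I, 0, 0], [0, 0, I, 0]]`. -/
noncomputable def Mmat (G : SimpleGraph V) [DecidableRel G.Adj] :
    Matrix ((DiEdge G ⊕ DiEdge G) ⊕ (DiEdge G ⊕ DiEdge G))
      ((DiEdge G ⊕ DiEdge G) ⊕ (DiEdge G ⊕ DiEdge G)) ℂ :=
  Matrix.fromBlocks
    (Matrix.fromBlocks (Bmat G) (-(dB2 G)) 1 0)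
    (Matrix.fromBlocks (Ddel G - 1) (Bmat G - dB1 G) 0 0)
    (Matrix.fromBlocks 0 1 0 0)
    (Matrix.fromBlocks 0 0 1 0)

/-- `x_{(i,j)} = Σ_k ψ_{(i,j,k)}`, the sum over all vertices `k` adjacent to `j` with
`k ≠ i`; equivalently, the sum of `ψ` over all length-2 directed paths starting `(i,j,·)`. -/
noncomputable def xvec (G : SimpleGraph V) [DecidableRel G.Adj] (ψ : DiPath G 2 → ℂ) :
    DiEdge G → ℂ := fun e =>
  ∑ p ∈ Finset.univ.filter (fun p : DiPath G 2 => p.1 0 = e.1.1 ∧ p.1 1 = e.1.2), ψ p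

/-- `y_{(i,j)} = Σ_k ψ_{(i,j,k)}`, the sum over all vertices `k` adjacent to both `i`
and `j`. -/
noncomputable def yvec (G : SimpleGraph V) [DecidableRel G.Adj] (ψ : DiPath G 2 → ℂ) :
    DiEdge G → ℂ := fun e =>
  ∑ p ∈ Finset.univ.filter
    (fun p : DiPath G 2 => p.1 0 = e.1.1 ∧ p.1 1 = e.1.2 ∧ G.Adj e.1.1 (p.1 2)), ψ p

/-- The block vector `z = (x, λ⁻¹x, λ⁻²x, λ⁻³x)`. -/
noncomputable def blockVec {G : SimpleGraph V} (lam : ℂ) (x : DiEdge G → ℂ) :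
    (DiEdge G ⊕ DiEdge G) ⊕ (DiEdge G ⊕ DiEdge G) → ℂ :=
  Sum.elim (Sum.elim x (lam⁻¹ • x)) (Sum.elim ((lam ^ 2)⁻¹ • x) ((lam ^ 3)⁻¹ • x))

/-- The vector `ψ` built from `x`:
`ψ_{(i,j,k)} = (λ²x_{(j,k)} − λx_{(k,i)} + x_{(i,j)})/(λ³+1)` if `i` and `k` are adjacent,
and `ψ_{(i,j,k)} = λ⁻¹ x_{(j,k)}` if `i` and `k` are not adjacent. -/
noncomputable def psiOf (G : SimpleGraph V) [DecidableRel G.Adj] (lam : ℂ)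
    (x : DiEdge G → ℂ) : DiPath G 2 → ℂ := fun p =>
  if h : G.Adj (p.1 0) (p.1 2) then
    (lam ^ 2 * x ⟨(p.1 1, p.1 2), by simpa using p.2.2 1⟩
      - lam * x ⟨(p.1 2, p.1 0), h.symm⟩
      + x ⟨(p.1 0, p.1 1), by simpa using p.2.2 0⟩) / (lam ^ 3 + 1)
  else lam⁻¹ * x ⟨(p.1 1, p.1 2), by simpa using p.2.2 1⟩

variable {G : SimpleGraph V} [DecidableRel G.Adj]

lemma isDiPath2_iff (f : Fin 3 → V) :
    IsDiPath G 2 f ↔ G.Adj (f 0) (f 1) ∧ G.Adj (f 1) (f 2) ∧ f 0 ≠ f 2 := by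
  constructor
  · rintro ⟨hinj, hadj⟩
    refine ⟨?_, ?_, fun h => ?_⟩
    · simpa using hadj 0
    · simpa using hadj 1
    · have := hinj h
      simp at this
  · rintro ⟨h01, h12, h02⟩
    refine ⟨?_, ?_⟩
    · intro x y hxy
      fin_cases x <;> fin_cases y <;> simp_all <;>
        first
          | exact absurd hxy h01.ne
          | exact absurd hxy h12.ne
          | exact absurd hxy h02
          | exact absurd hxy.symm h01.ne
          | exact absurd hxy.symm h12.ne
          | exact absurd hxy.symm h02
    · intro k
      fin_cases k
      · simpa using h01
      · simpa using h12

lemma isDiPath3_iff (f : Fin 4 → V) :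
    IsDiPath G 3 f ↔ G.Adj (f 0) (f 1) ∧ G.Adj (f 1) (f 2) ∧ G.Adj (f 2) (f 3) ∧
      f 0 ≠ f 2 ∧ f 0 ≠ f 3 ∧ f 1 ≠ f 3 := by
  constructor
  · rintro ⟨hinj, hadj⟩
    refine ⟨?_, ?_, ?_, fun h => ?_, fun h => ?_, fun h => ?_⟩
    · simpa using hadj 0
    · simpa using hadj 1
    · simpa using hadj 2
    · have := hinj h; simp at this
    · have := hinj h; simp at this
    · have := hinj h; simp at this
  · rintro ⟨h01, h12, h23, h02, h03, h13⟩
    refine ⟨?_, ?_⟩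
    · intro x y hxy
      fin_cases x <;> fin_cases y <;> simp_all <;>
        first
          | exact absurd hxy h01.ne
          | exact absurd hxy h12.ne
          | exact absurd hxy h23.ne
          | exact absurd hxy h02
          | exact absurd hxy h03
          | exact absurd hxy h13
          | exact absurd hxy.symm h01.ne
          | exact absurd hxy.symm h12.ne
          | exact absurd hxy.symm h23.ne
          | exact absurd hxy.symm h02
          | exact absurd hxy.symm h03
          | exact absurd hxy.symm h13
    · intro k
      fin_cases k
      · simpa using h01
      · simpa using h12
      · simpa using h23

def tripleEquiv : (Fin 3 → V) ≃ V × V × V where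
  toFun f := (f 0, f 1, f 2)
  invFun x := ![x.1, x.2.1, x.2.2]
  left_inv f := by
    funext k
    fin_cases k <;> rfl
  right_inv x := rfl

/-- Paths as triples: `path2 a b c _ _ _ : DiPath G 2`. -/
def path2 (a b c : V) (h1 : G.Adj a b) (h2 : G.Adj b c) (h3 : a ≠ c) : DiPath G 2 :=
  ⟨![a, b, c], (isDiPath2_iff _).2 ⟨h1, h2, h3⟩⟩

@[simp] lemma path2_val0 (a b c : V) (h1 : G.Adj a b) (h2 : G.Adj b c) (h3 : a ≠ c) :
    (path2 a b c h1 h2 h3).1 0 = a := rfl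
@[simp] lemma path2_val1 (a b c : V) (h1 : G.Adj a b) (h2 : G.Adj b c) (h3 : a ≠ c) :
    (path2 a b c h1 h2 h3).1 1 = b := rfl
@[simp] lemma path2_val2 (a b c : V) (h1 : G.Adj a b) (h2 : G.Adj b c) (h3 : a ≠ c) :
    (path2 a b c h1 h2 h3).1 2 = c := rfl

lemma path2_eta (p : DiPath G 2) (h1 : G.Adj (p.1 0) (p.1 1)) (h2 : G.Adj (p.1 1) (p.1 2))
    (h3 : p.1 0 ≠ p.1 2) : path2 (p.1 0) (p.1 1) (p.1 2) h1 h2 h3 = p := by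
  apply Subtype.ext
  funext k
  fin_cases k <;> rfl

lemma sum_dipath (g : V → V → V → ℂ) :
    ∑ p : DiPath G 2, g (p.1 0) (p.1 1) (p.1 2)
      = ∑ a, ∑ b, ∑ c,
          if G.Adj a b ∧ G.Adj b c ∧ a ≠ c then g a b c else 0 := by
  have h1 : ∑ p : DiPath G 2, g (p.1 0) (p.1 1) (p.1 2)
      = ∑ f ∈ Finset.univ.filter (IsDiPath G 2), g (f 0) (f 1) (f 2) :=
    (Finset.sum_subtype _ (fun f => by simp) (fun f : Fin 3 → V => g (f 0) (f 1) (f 2))).symm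
  rw [h1, Finset.sum_filter]
  have h2 : ∑ f : Fin 3 → V, (if IsDiPath G 2 f then g (f 0) (f 1) (f 2) else 0)
      = ∑ x : V × V × V, (if G.Adj x.1 x.2.1 ∧ G.Adj x.2.1 x.2.2 ∧ x.1 ≠ x.2.2
          then g x.1 x.2.1 x.2.2 else 0) := by
    refine Fintype.sum_equiv tripleEquiv _ _ (fun f => ?_)
    simp only [isDiPath2_iff]
    rfl
  rw [h2, Fintype.sum_prod_type]
  simp [Fintype.sum_prod_type]

lemma sum_diedge (g : V → V → ℂ) :
    ∑ f : DiEdge G, g f.1.1 f.1.2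
      = ∑ a, ∑ b, if G.Adj a b then g a b else 0 := by
  have h1 : ∑ f : DiEdge G, g f.1.1 f.1.2
      = ∑ e ∈ Finset.univ.filter (fun e : V × V => G.Adj e.1 e.2), g e.1 e.2 :=
    (Finset.sum_subtype _ (fun e => by simp) (fun e : V × V => g e.1 e.2)).symm
  rw [h1, Finset.sum_filter, Fintype.sum_prod_type]

/-- The totalization of a path function. -/
noncomputable def psiT (ψ : DiPath G 2 → ℂ) : V → V → V → ℂ := fun a b c =>
  if h : G.Adj a b ∧ G.Adj b c ∧ a ≠ c then ψ (path2 a b c h.1 h.2.1 h.2.2) else 0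

lemma psiT_eq (ψ : DiPath G 2 → ℂ) (p : DiPath G 2) :
    psiT ψ (p.1 0) (p.1 1) (p.1 2) = ψ p := by
  have h := (isDiPath2_iff (G := G) p.1).1 p.2
  rw [psiT, dif_pos h, path2_eta]

lemma psiT_eq_zero_of (ψ : DiPath G 2 → ℂ) {a b c : V}
    (h : ¬(G.Adj a b ∧ G.Adj b c ∧ a ≠ c)) : psiT ψ a b c = 0 := by
  rw [psiT, dif_neg h]

lemma snoc_eq (f : Fin 3 → V) (w : V) : (Fin.snoc f w : Fin 4 → V) = ![f 0, f 1, f 2, w] := by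
  funext k
  fin_cases k <;> rfl

lemma isDiPath3_vec (a b c d : V) :
    IsDiPath G 3 ![a, b, c, d] ↔ G.Adj a b ∧ G.Adj b c ∧ G.Adj c d ∧ a ≠ c ∧ a ≠ d ∧ b ≠ d := by
  rw [isDiPath3_iff]
  rfl

lemma NBM_entry (ψ : DiPath G 2 → ℂ) (p q : DiPath G 2) :
    NBM G 2 p q * ψ q =
      if q.1 0 = p.1 1 ∧ q.1 1 = p.1 2 ∧ q.1 2 ≠ p.1 0 then
        psiT ψ (q.1 0) (q.1 1) (q.1 2) else 0 := by
  obtain ⟨hp1, hp2, hp3⟩ := (isDiPath2_iff (G := G) p.1).1 p.2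
  obtain ⟨hq1, hq2, hq3⟩ := (isDiPath2_iff (G := G) q.1).1 q.2
  have hfirst : (∀ k : Fin 2, q.1 k.castSucc = p.1 k.succ) ↔ (q.1 0 = p.1 1 ∧ q.1 1 = p.1 2) := by
    rw [Fin.forall_fin_two]
    simp
  have hsnoc : (Fin.snoc p.1 (q.1 (Fin.last 2)) : Fin 4 → V) = ![p.1 0, p.1 1, p.1 2, q.1 2] :=
    snoc_eq p.1 (q.1 (Fin.last 2))
  have key : ((∀ k : Fin 2, q.1 k.castSucc = p.1 k.succ) ∧
      IsDiPath G 3 (Fin.snoc p.1 (q.1 (Fin.last 2)))) ↔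
      (q.1 0 = p.1 1 ∧ q.1 1 = p.1 2 ∧ q.1 2 ≠ p.1 0) := by
    constructor
    · rintro ⟨hf, hpath⟩
      obtain ⟨h0, h1⟩ := hfirst.1 hf
      refine ⟨h0, h1, ?_⟩
      rw [hsnoc, isDiPath3_vec] at hpath
      exact fun hh => hpath.2.2.2.2.1 hh.symm
    · rintro ⟨h0, h1, h2⟩
      refine ⟨hfirst.2 ⟨h0, h1⟩, ?_⟩
      rw [hsnoc, isDiPath3_vec]
      exact ⟨hp1, hp2, h1 ▸ hq2, hp3, fun hh => h2 hh.symm, h0 ▸ hq3⟩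
  rw [NBM, psiT_eq]
  by_cases h : q.1 0 = p.1 1 ∧ q.1 1 = p.1 2 ∧ q.1 2 ≠ p.1 0
  · rw [if_pos (key.2 h), if_pos h, one_mul]
  · rw [if_neg (fun hh => h (key.1 hh)), if_neg h, zero_mul]

lemma star_rel (ψ : DiPath G 2 → ℂ) (lam : ℂ) (hψ : NBM G 2 *ᵥ ψ = lam • ψ)
    (a b c : V) (h1 : G.Adj a b) (h2 : G.Adj b c) (h3 : a ≠ c) :
    lam * psiT ψ a b c = (∑ l, psiT ψ b c l) - psiT ψ b c a := by
  have hp := congrFun hψ (path2 a b c h1 h2 h3)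
  rw [Matrix.mulVec, Pi.smul_apply, smul_eq_mul] at hp
  have hpsi : psiT ψ a b c = ψ (path2 a b c h1 h2 h3) := dif_pos ⟨h1, h2, h3⟩
  rw [hpsi, ← hp]
  show ∑ q, NBM G 2 (path2 a b c h1 h2 h3) q * ψ q = _
  have hentry : ∀ q : DiPath G 2, NBM G 2 (path2 a b c h1 h2 h3) q * ψ q =
      (fun u v w => if u = b ∧ v = c ∧ w ≠ a then psiT ψ u v w else 0) (q.1 0) (q.1 1) (q.1 2) := by
    intro q
    rw [NBM_entry]
    simp only [path2_val0, path2_val1, path2_val2]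
    exact if_congr Iff.rfl rfl rfl
  rw [Finset.sum_congr rfl (fun q _ => hentry q),
    sum_dipath (fun u v w => if u = b ∧ v = c ∧ w ≠ a then psiT ψ u v w else 0)]
  have hpt : ∀ u v w : V,
      (if G.Adj u v ∧ G.Adj v w ∧ u ≠ w then
        (if u = b ∧ v = c ∧ w ≠ a then psiT ψ u v w else 0) else 0)
      = if u = b then (if v = c then (if w ≠ a then psiT ψ u v w else 0) else 0) else 0 := by
    intro u v w
    by_cases hu : u = b
    · by_cases hv : v = c
      · by_cases hw : w ≠ a
        · simp only [hu, hv, hw, and_true, true_and, if_true]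
          by_cases hc : G.Adj b c ∧ G.Adj c w ∧ b ≠ w
          · rw [if_pos hc]
          · rw [if_neg hc, psiT_eq_zero_of ψ hc]
            simp
        · simp_all
      · simp_all
    · simp_all
  simp only [hpt]
  have step1 : ∀ u : V, (∑ v, ∑ w,
        if u = b then (if v = c then (if w ≠ a then psiT ψ u v w else 0) else 0) else 0)
      = if u = b then (∑ v, ∑ w, if v = c then (if w ≠ a then psiT ψ u v w else 0) else 0)
        else 0 := by
    intro u
    by_cases hu : u = b <;> simp [hu]
  rw [Finset.sum_congr rfl (fun u _ => step1 u), Finset.sum_ite_eq' Finset.univ b,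
    if_pos (Finset.mem_univ b)]
  have step2 : ∀ v : V, (∑ w, if v = c then (if w ≠ a then psiT ψ b v w else 0) else 0)
      = if v = c then (∑ w, if w ≠ a then psiT ψ b v w else 0) else 0 := by
    intro v
    by_cases hv : v = c <;> simp [hv]
  rw [Finset.sum_congr rfl (fun v _ => step2 v), Finset.sum_ite_eq' Finset.univ c,
    if_pos (Finset.mem_univ c)]
  have hsub : ∀ w : V, (if w ≠ a then psiT ψ b c w else 0)
      = psiT ψ b c w - (if w = a then psiT ψ b c w else 0) := by
    intro w
    by_cases hw : w = a <;> simp [hw]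
  rw [Finset.sum_congr rfl (fun w _ => hsub w), Finset.sum_sub_distrib,
    Finset.sum_ite_eq' Finset.univ a, if_pos (Finset.mem_univ a)]

/-- `X_{(a,b)} = Σ_c ψ_{(a,b,c)}`, totalized. -/
noncomputable def Xv (ψ : DiPath G 2 → ℂ) (a b : V) : ℂ := ∑ c, psiT ψ a b c

/-- `Y_{(i,j)} = Σ_{k ~ i} ψ_{(i,j,k)}`. -/
noncomputable def Yv (ψ : DiPath G 2 → ℂ) (i j : V) : ℂ :=
  ∑ k, if G.Adj i k then psiT ψ i j k else 0

/-- `S_{(i,j)} = Σ_k ψ_{(j,k,i)}`. -/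
noncomputable def Sv (ψ : DiPath G 2 → ℂ) (i j : V) : ℂ := ∑ k, psiT ψ j k i

/-- `S2_{(i,j)} = Σ_{k ~ j} ψ_{(k,i,j)}`. -/
noncomputable def S2v (ψ : DiPath G 2 → ℂ) (i j : V) : ℂ :=
  ∑ k, if G.Adj j k then psiT ψ k i j else 0

section Rels

variable (ψ : DiPath G 2 → ℂ) (lam : ℂ) (hψ : NBM G 2 *ᵥ ψ = lam • ψ)
variable {i j : V} (hij : G.Adj i j)

include hψ hij

lemma rel1 : lam * Xv ψ i j
    = (∑ k, if G.Adj j k ∧ k ≠ i then Xv ψ j k else 0) - Sv ψ i j := by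
  have pt : ∀ k : V, lam * psiT ψ i j k
      = (if G.Adj j k ∧ k ≠ i then Xv ψ j k else 0) - psiT ψ j k i := by
    intro k
    by_cases hc : G.Adj j k ∧ i ≠ k
    · rw [star_rel ψ lam hψ i j k hij hc.1 hc.2, if_pos ⟨hc.1, hc.2.symm⟩, Xv]
    · rw [psiT_eq_zero_of ψ (fun h => hc ⟨h.2.1, h.2.2⟩), mul_zero,
        if_neg (fun h => hc ⟨h.1, h.2.symm⟩),
        psiT_eq_zero_of ψ (fun h => hc ⟨h.1, h.2.1.ne.symm⟩), zero_sub, neg_zero]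
  rw [Xv, Finset.mul_sum, Finset.sum_congr rfl (fun k _ => pt k), Finset.sum_sub_distrib, Sv]

lemma rel2 : lam * Yv ψ i j
    = (∑ k, if G.Adj i k ∧ G.Adj j k then Xv ψ j k else 0) - Sv ψ i j := by
  have pt : ∀ k : V, lam * (if G.Adj i k then psiT ψ i j k else 0)
      = (if G.Adj i k ∧ G.Adj j k then Xv ψ j k else 0) - psiT ψ j k i := by
    intro k
    by_cases hik : G.Adj i k
    · by_cases hjk : G.Adj j k
      · rw [if_pos hik, if_pos ⟨hik, hjk⟩,
          star_rel ψ lam hψ i j k hij hjk hik.ne, Xv]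
      · rw [if_pos hik, psiT_eq_zero_of ψ (fun h => hjk h.2.1), mul_zero,
          if_neg (fun h => hjk h.2), psiT_eq_zero_of ψ (fun h => hjk h.1),
          zero_sub, neg_zero]
    · rw [if_neg hik, mul_zero, if_neg (fun h => hik h.1),
        psiT_eq_zero_of ψ (fun h => hik h.2.1.symm), zero_sub, neg_zero]
  rw [Yv, Finset.mul_sum, Finset.sum_congr rfl (fun k _ => pt k), Finset.sum_sub_distrib, Sv]

lemma rel3 : lam * Sv ψ i j
    = (∑ k, if G.Adj j k ∧ G.Adj k i then Xv ψ k i else 0) - S2v ψ i j := by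
  have pt : ∀ k : V, lam * psiT ψ j k i
      = (if G.Adj j k ∧ G.Adj k i then Xv ψ k i else 0) - (if G.Adj j k then psiT ψ k i j else 0) := by
    intro k
    by_cases hjk : G.Adj j k
    · by_cases hki : G.Adj k i
      · rw [star_rel ψ lam hψ j k i hjk hki hij.ne', if_pos ⟨hjk, hki⟩, if_pos hjk, Xv]
      · rw [psiT_eq_zero_of ψ (fun h => hki h.2.1), mul_zero,
          if_neg (fun h => hki h.2), if_pos hjk,
          psiT_eq_zero_of ψ (fun h => hki h.1), zero_sub, neg_zero]
    · rw [psiT_eq_zero_of ψ (fun h => hjk h.1), mul_zero,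
        if_neg (fun h => hjk h.1), if_neg hjk, zero_sub, neg_zero]
  rw [Sv, Finset.mul_sum, Finset.sum_congr rfl (fun k _ => pt k), Finset.sum_sub_distrib, S2v]

lemma rel4 : lam * S2v ψ i j
    = (∑ k, if G.Adj i k ∧ G.Adj j k then Xv ψ i j else 0) - Yv ψ i j := by
  have pt : ∀ k : V, lam * (if G.Adj j k then psiT ψ k i j else 0)
      = (if G.Adj i k ∧ G.Adj j k then Xv ψ i j else 0)
        - (if G.Adj i k then psiT ψ i j k else 0) := by
    intro k
    by_cases hjk : G.Adj j k
    · by_cases hki : G.Adj k i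
      · rw [if_pos hjk, star_rel ψ lam hψ k i j hki hij hjk.ne', if_pos ⟨hki.symm, hjk⟩,
          if_pos hki.symm, Xv]
      · rw [if_pos hjk, psiT_eq_zero_of ψ (fun h => hki h.1), mul_zero,
          if_neg (fun h : G.Adj i k ∧ G.Adj j k => hki h.1.symm),
          if_neg (fun h : G.Adj i k => hki h.symm), sub_zero]
    · rw [if_neg hjk, mul_zero, if_neg (fun h => hjk h.2),
        psiT_eq_zero_of ψ (fun h => hjk h.2.1), ite_self, zero_sub, neg_zero]
  rw [S2v, Finset.mul_sum, Finset.sum_congr rfl (fun k _ => pt k), Finset.sum_sub_distrib, Yv]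

end Rels

lemma sum_pull (b0 : V) (H : V → V → ℂ) :
    (∑ u, ∑ w, if u = b0 then H u w else 0) = ∑ w, H b0 w := by
  have h : ∀ u, (∑ w, if u = b0 then H u w else 0) = if u = b0 then (∑ w, H u w) else 0 :=
    fun u => by by_cases hu : u = b0 <;> simp [hu]
  rw [Finset.sum_congr rfl (fun u _ => h u), Finset.sum_ite_eq' Finset.univ b0,
    if_pos (Finset.mem_univ b0)]

section Entries

variable (vv : DiEdge G → ℂ) (F : V → V → ℂ) (hF : ∀ e : DiEdge G, vv e = F e.1.1 e.1.2)
variable (e : DiEdge G)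

include hF

lemma Bmat_entry : (Bmat G *ᵥ vv) e
    = ∑ k, if G.Adj e.1.2 k ∧ k ≠ e.1.1 then F e.1.2 k else 0 := by
  show ∑ f, Bmat G e f * vv f = _
  have h1 : ∀ f : DiEdge G, Bmat G e f * vv f =
      (fun a b => (if e.1.2 = a ∧ b ≠ e.1.1 ∧ G.Adj e.1.2 b then 1 else 0) * F a b)
        f.1.1 f.1.2 := by
    intro f
    rw [hF f, Bmat]
  rw [Finset.sum_congr rfl (fun f _ => h1 f),
    sum_diedge (fun a b => (if e.1.2 = a ∧ b ≠ e.1.1 ∧ G.Adj e.1.2 b then 1 else 0) * F a b)]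
  have h2 : ∀ a b : V,
      (if G.Adj a b then (if e.1.2 = a ∧ b ≠ e.1.1 ∧ G.Adj e.1.2 b then 1 else 0) * F a b else 0)
      = if a = e.1.2 then (if G.Adj e.1.2 b ∧ b ≠ e.1.1 then F e.1.2 b else 0) else 0 := by
    intro a b
    by_cases ha : a = e.1.2 <;> by_cases hadj : G.Adj a b <;>
      by_cases hb : b = e.1.1 <;> simp_all <;> exact fun h => absurd h.symm ha
  simp only [h2]
  rw [sum_pull]

lemma dB1_entry : (dB1 G *ᵥ vv) e
    = ∑ k, if G.Adj e.1.1 k ∧ G.Adj e.1.2 k then F e.1.2 k else 0 := by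
  show ∑ f, dB1 G e f * vv f = _
  have h1 : ∀ f : DiEdge G, dB1 G e f * vv f =
      (fun a b => (if (e.1.2 = a ∧ b ≠ e.1.1 ∧ G.Adj e.1.2 b) ∧ G.Adj e.1.1 b then 1 else 0)
        * F a b) f.1.1 f.1.2 := by
    intro f
    rw [hF f, dB1]
  rw [Finset.sum_congr rfl (fun f _ => h1 f),
    sum_diedge (fun a b =>
      (if (e.1.2 = a ∧ b ≠ e.1.1 ∧ G.Adj e.1.2 b) ∧ G.Adj e.1.1 b then 1 else 0) * F a b)]
  have h2 : ∀ a b : V,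
      (if G.Adj a b then
        (if (e.1.2 = a ∧ b ≠ e.1.1 ∧ G.Adj e.1.2 b) ∧ G.Adj e.1.1 b then 1 else 0) * F a b else 0)
      = if a = e.1.2 then (if G.Adj e.1.1 b ∧ G.Adj e.1.2 b then F e.1.2 b else 0) else 0 := by
    intro a b
    by_cases ha : a = e.1.2 <;> by_cases hadj : G.Adj a b <;>
      by_cases hb : b = e.1.1 <;> simp_all <;> exact fun h => absurd h.symm ha
  simp only [h2]
  rw [sum_pull]

lemma dB2_entry : (dB2 G *ᵥ vv) e
    = ∑ k, if G.Adj e.1.2 k ∧ G.Adj k e.1.1 then F k e.1.1 else 0 := by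
  show ∑ f, dB2 G e f * vv f = _
  have h1 : ∀ f : DiEdge G, dB2 G e f * vv f =
      (fun a b => (if b = e.1.1 ∧ G.Adj e.1.2 a then 1 else 0) * F a b) f.1.1 f.1.2 := by
    intro f
    rw [hF f, dB2]
  rw [Finset.sum_congr rfl (fun f _ => h1 f),
    sum_diedge (fun a b => (if b = e.1.1 ∧ G.Adj e.1.2 a then 1 else 0) * F a b)]
  have h2 : ∀ a b : V,
      (if G.Adj a b then (if b = e.1.1 ∧ G.Adj e.1.2 a then 1 else 0) * F a b else 0)
      = if b = e.1.1 then (if G.Adj e.1.2 a ∧ G.Adj a e.1.1 then F a e.1.1 else 0) else 0 := by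
    intro a b
    by_cases hb : b = e.1.1 <;> by_cases hadj : G.Adj a b <;>
      by_cases hc : G.Adj e.1.2 a <;> simp_all
  simp only [h2]
  have h3 : ∀ a : V, (∑ b, if b = e.1.1 then
      (if G.Adj e.1.2 a ∧ G.Adj a e.1.1 then F a e.1.1 else 0) else 0)
      = if G.Adj e.1.2 a ∧ G.Adj a e.1.1 then F a e.1.1 else 0 := by
    intro a
    rw [Finset.sum_ite_eq' Finset.univ e.1.1, if_pos (Finset.mem_univ _)]
  rw [Finset.sum_congr rfl (fun a _ => h3 a)]

lemma Ddel_entry : (Ddel G *ᵥ vv) e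
    = ∑ k, if G.Adj e.1.1 k ∧ G.Adj e.1.2 k then F e.1.1 e.1.2 else 0 := by
  rw [Ddel, Matrix.mulVec_diagonal, hF e, ← Finset.sum_filter, Finset.sum_const,
    nsmul_eq_mul]

end Entries

lemma diagonal_mv {n : Type*} [Fintype n] [DecidableEq n] (d : n → ℂ) (v : n → ℂ) :
    (Matrix.diagonal d) *ᵥ v = fun i => d i * v i := by
  funext i
  rw [Matrix.mulVec_diagonal]

lemma mem_spectrum_of_eigen {n : Type*} [Fintype n] [DecidableEq n]
    (A : Matrix n n ℂ) (lam : ℂ) (v : n → ℂ) (hv : v ≠ 0)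
    (h : A *ᵥ v = lam • v) : lam ∈ spectrum ℂ A := by
  rw [spectrum.mem_iff]
  intro hU
  rw [Matrix.isUnit_iff_isUnit_det, isUnit_iff_ne_zero] at hU
  apply hU
  rw [← Matrix.exists_mulVec_eq_zero_iff]
  refine ⟨v, hv, ?_⟩
  rw [Matrix.sub_mulVec, h, Matrix.algebraMap_eq_diagonal, diagonal_mv]
  funext i
  simp

lemma eigen_of_mem_spectrum {n : Type*} [Fintype n] [DecidableEq n]
    (A : Matrix n n ℂ) (lam : ℂ)
    (h : lam ∈ spectrum ℂ A) : ∃ v, v ≠ 0 ∧ A *ᵥ v = lam • v := by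
  rw [spectrum.mem_iff] at h
  rw [Matrix.isUnit_iff_isUnit_det, isUnit_iff_ne_zero, not_not,
    ← Matrix.exists_mulVec_eq_zero_iff] at h
  obtain ⟨v, hv, hv0⟩ := h
  refine ⟨v, hv, ?_⟩
  rw [Matrix.sub_mulVec, Matrix.algebraMap_eq_diagonal, diagonal_mv, sub_eq_zero] at hv0
  rw [← hv0]
  funext i
  simp

lemma Mmat_eigen (lam : ℂ) (h0 : lam ≠ 0) (x : DiEdge G → ℂ)
    (row1 : ∀ e : DiEdge G, lam ^ 4 * x e
      = lam ^ 3 * (Bmat G *ᵥ x) e - lam ^ 2 * (dB2 G *ᵥ x) e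
        + lam * ((Ddel G *ᵥ x) e - x e) + ((Bmat G *ᵥ x) e - (dB1 G *ᵥ x) e)) :
    Mmat G *ᵥ blockVec lam x = lam • blockVec lam x := by
  have hl3 : lam ^ 3 ≠ 0 := pow_ne_zero _ h0
  rw [Mmat, blockVec, Matrix.fromBlocks_mulVec]
  funext s
  rcases s with (e | e) | (e | e)
  · rw [Sum.elim_inl, Pi.add_apply, Matrix.fromBlocks_mulVec, Matrix.fromBlocks_mulVec,
      Sum.elim_inl, Sum.elim_inl]
    simp only [Pi.add_apply, Matrix.neg_mulVec, Matrix.sub_mulVec, Matrix.mulVec_smul,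
      Matrix.one_mulVec, Matrix.zero_mulVec, Pi.neg_apply, Pi.smul_apply, Pi.sub_apply,
      Pi.zero_apply, smul_eq_mul, Sum.elim_inl, Sum.elim_comp_inl, Sum.elim_comp_inr]
    have h := row1 e
    field_simp
    linear_combination (-1) * h
  · rw [Sum.elim_inl, Pi.add_apply, Matrix.fromBlocks_mulVec, Matrix.fromBlocks_mulVec,
      Sum.elim_inr, Sum.elim_inr]
    simp only [Pi.add_apply, Matrix.mulVec_smul, Matrix.one_mulVec, Matrix.zero_mulVec,
      Pi.smul_apply, Pi.zero_apply, smul_eq_mul, Sum.elim_inl, Sum.elim_inr,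
      Sum.elim_comp_inl, Sum.elim_comp_inr]
    field_simp
    ring
  · rw [Sum.elim_inr, Pi.add_apply, Matrix.fromBlocks_mulVec, Matrix.fromBlocks_mulVec,
      Sum.elim_inl, Sum.elim_inl]
    simp only [Pi.add_apply, Matrix.mulVec_smul, Matrix.one_mulVec, Matrix.zero_mulVec,
      Pi.smul_apply, Pi.zero_apply, smul_eq_mul, Sum.elim_inl, Sum.elim_inr,
      Sum.elim_comp_inl, Sum.elim_comp_inr]
    field_simp
    ring
  · rw [Sum.elim_inr, Pi.add_apply, Matrix.fromBlocks_mulVec, Matrix.fromBlocks_mulVec,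
      Sum.elim_inr, Sum.elim_inr]
    simp only [Pi.add_apply, Matrix.mulVec_smul, Matrix.one_mulVec, Matrix.zero_mulVec,
      Pi.smul_apply, Pi.zero_apply, smul_eq_mul, Sum.elim_inl, Sum.elim_inr,
      Sum.elim_comp_inl, Sum.elim_comp_inr]
    field_simp
    ring

lemma blockVec_ne_zero (lam : ℂ) (x : DiEdge G → ℂ) (e : DiEdge G) (he : x e ≠ 0) :
    blockVec (G := G) lam x ≠ 0 := by
  intro h
  apply he
  have := congrFun h (Sum.inl (Sum.inl e))
  simpa [blockVec] using this

/-- **Theorem 2, part (i).** Every nonzero complex eigenvalue `λ` of the 2nd-order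
non-backtracking matrix `B^(2)` of `G` is also an eigenvalue of the matrix `M`. -/
theorem mem_spectrum_M_of_mem_spectrum_nbm (G : SimpleGraph V) [DecidableRel G.Adj]
    (lam : ℂ) (h0 : lam ≠ 0) (h : lam ∈ spectrum ℂ (NBM G 2)) :
    lam ∈ spectrum ℂ (Mmat G) := by
  obtain ⟨ψ, hψ0, hψ⟩ := eigen_of_mem_spectrum _ _ h
  by_cases hx : ∃ e : DiEdge G, Xv ψ e.1.1 e.1.2 ≠ 0
  · obtain ⟨e0, he0⟩ := hx
    set x : DiEdge G → ℂ := fun e => Xv ψ e.1.1 e.1.2 with hxdef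
    have hF : ∀ f : DiEdge G, x f = Xv ψ f.1.1 f.1.2 := fun _ => rfl
    refine mem_spectrum_of_eigen _ _ (blockVec lam x)
      (blockVec_ne_zero lam x e0 he0) (Mmat_eigen lam h0 x ?_)
    intro e
    have hxe : x e = Xv ψ e.1.1 e.1.2 := rfl
    rw [Bmat_entry x (Xv ψ) hF e, dB1_entry x (Xv ψ) hF e, dB2_entry x (Xv ψ) hF e,
      Ddel_entry x (Xv ψ) hF e, hxe]
    have r1 := rel1 ψ lam hψ e.2
    have r2 := rel2 ψ lam hψ e.2
    have r3 := rel3 ψ lam hψ e.2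
    have r4 := rel4 ψ lam hψ e.2
    linear_combination (1 + lam ^ 3) * r1 - r2 - lam ^ 2 * r3 + lam * r4
  · push_neg at hx
    obtain ⟨p, hp⟩ := Function.ne_iff.1 hψ0
    have hp' : ψ p ≠ 0 := by simpa using hp
    obtain ⟨h1, h2, h3⟩ := (isDiPath2_iff (G := G) p.1).1 p.2
    set a := p.1 0 with ha
    set b := p.1 1 with hb
    set c := p.1 2 with hc
    have hpsi : psiT ψ a b c ≠ 0 := by
      rw [ha, hb, hc, psiT_eq]
      exact hp'
    have hXab : Xv ψ a b = 0 := hx ⟨(a, b), h1⟩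
    have hXbc : Xv ψ b c = 0 := hx ⟨(b, c), h2⟩
    have hca : G.Adj c a := by
      by_contra hca
      apply hpsi
      have hstar := star_rel ψ lam hψ a b c h1 h2 h3
      rw [show (∑ l, psiT ψ b c l) = Xv ψ b c from rfl, hXbc,
        psiT_eq_zero_of ψ (fun hh => hca hh.2.1), zero_sub, neg_zero] at hstar
      exact (mul_eq_zero.1 hstar).resolve_left h0
    have hXca : Xv ψ c a = 0 := hx ⟨(c, a), hca⟩
    have s1 := star_rel ψ lam hψ a b c h1 h2 h3
    have s2 := star_rel ψ lam hψ b c a h2 hca h1.ne'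
    have s3 := star_rel ψ lam hψ c a b hca h1 h2.ne'
    rw [show (∑ l, psiT ψ b c l) = Xv ψ b c from rfl, hXbc, zero_sub] at s1
    rw [show (∑ l, psiT ψ c a l) = Xv ψ c a from rfl, hXca, zero_sub] at s2
    rw [show (∑ l, psiT ψ a b l) = Xv ψ a b from rfl, hXab, zero_sub] at s3
    have hl3 : lam ^ 3 = -1 := by
      have hz : (lam ^ 3 + 1) * psiT ψ a b c = 0 := by
        linear_combination lam ^ 2 * s1 - lam * s2 + s3
      rcases mul_eq_zero.1 hz with h' | h'
      · linear_combination h'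
      · exact absurd h' hpsi
    set zf : V → ℂ := fun v => if v = a then 1 else 0 with hzf
    set F : V → V → ℂ := fun u v => zf u - lam ^ 2 * zf v with hFdef
    have hFeq : ∀ u v, F u v = zf u - lam ^ 2 * zf v := fun _ _ => rfl
    set w : DiEdge G → ℂ := fun e => F e.1.1 e.1.2 with hwdef
    have hw0 : w ⟨(a, b), h1⟩ ≠ 0 := by
      have : w ⟨(a, b), h1⟩ = 1 := by
        rw [hwdef]
        show F a b = 1
        rw [hFeq, hzf]
        simp [h1.ne']
      rw [this]
      exact one_ne_zero
    refine mem_spectrum_of_eigen _ _ (blockVec lam w)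
      (blockVec_ne_zero lam w ⟨(a, b), h1⟩ hw0) (Mmat_eigen lam h0 w ?_)
    intro e
    have hwe : w e = F e.1.1 e.1.2 := rfl
    rw [Bmat_entry w F (fun _ => rfl) e, dB1_entry w F (fun _ => rfl) e,
      dB2_entry w F (fun _ => rfl) e, Ddel_entry w F (fun _ => rfl) e, hwe]
    have key : ∀ k : V,
        lam ^ 2 * (if G.Adj e.1.2 k ∧ G.Adj k e.1.1 then F k e.1.1 else 0)
          - lam * (if G.Adj e.1.1 k ∧ G.Adj e.1.2 k then F e.1.1 e.1.2 else 0)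
          + (if G.Adj e.1.1 k ∧ G.Adj e.1.2 k then F e.1.2 k else 0) = 0 := by
      intro k
      by_cases hik : G.Adj e.1.1 k
      · by_cases hjk : G.Adj e.1.2 k
        · rw [if_pos ⟨hjk, hik.symm⟩, if_pos ⟨hik, hjk⟩, if_pos ⟨hik, hjk⟩,
            hFeq, hFeq, hFeq]
          linear_combination (zf e.1.2 - lam * zf e.1.1) * hl3
        · rw [if_neg (fun hh => hjk hh.1), if_neg (fun hh => hjk hh.2),
            if_neg (fun hh => hjk hh.2)]
          ring
      · rw [if_neg (fun hh => hik hh.2.symm), if_neg (fun hh => hik hh.1),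
          if_neg (fun hh => hik hh.1)]
        ring
    have hsum :
        lam ^ 2 * (∑ k, if G.Adj e.1.2 k ∧ G.Adj k e.1.1 then F k e.1.1 else 0)
          - lam * (∑ k, if G.Adj e.1.1 k ∧ G.Adj e.1.2 k then F e.1.1 e.1.2 else 0)
          + (∑ k, if G.Adj e.1.1 k ∧ G.Adj e.1.2 k then F e.1.2 k else 0) = 0 := by
      rw [Finset.mul_sum, Finset.mul_sum, ← Finset.sum_sub_distrib, ← Finset.sum_add_distrib]
      rw [Finset.sum_congr rfl (fun k _ => key k)]
      simp
    linear_combination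
      (lam * F e.1.1 e.1.2
        - (∑ k, if G.Adj e.1.2 k ∧ k ≠ e.1.1 then F e.1.2 k else 0)) * hl3 + hsum
end PercNB
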